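/- For every measurable compactly supported function f: ℝ → [0,1), the sum ∑_{n=0}^∞ E[f(R·(ρ_n − R))] converges, as R → +∞, to 2·∫_ℝ f(x) dx. -/

import Mathlib

open MeasureTheory ProbabilityTheory Filter Real

lemma stmt17_density_tsum (r : ℝ) :
    (∑' n : ℕ, ENNReal.ofReal (Set.indicator (Set.Ici (0:ℝ))
      (fun r => 2 * r ^ (2*n+1) * Real.exp (-r^2) / (Nat.factorial n)) r))
    = ENNReal.ofReal (Set.indicator (Set.Ici (0:ℝ)) (fun r => 2 * r) r) := by
  by_cases hr : r ∈ Set.Ici (0:ℝ)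
  · simp only [Set.indicator_of_mem hr]
    have hr0 : (0:ℝ) ≤ r := hr
    have key : ∀ n : ℕ, 2 * r ^ (2*n+1) * Real.exp (-r^2) / (Nat.factorial n)
        = (2 * r * Real.exp (-r^2)) * ((r^2)^n / (Nat.factorial n)) := by
      intro n
      rw [pow_succ, pow_mul]
      ring
    have hnn : ∀ n : ℕ, 0 ≤ 2 * r ^ (2*n+1) * Real.exp (-r^2) / (Nat.factorial n) := by
      intro n
      rw [key n]
      positivity
    have hsum : Summable (fun n : ℕ => 2 * r ^ (2*n+1) * Real.exp (-r^2) / (Nat.factorial n)) := by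
      refine Summable.congr ((Real.summable_pow_div_factorial (r^2)).mul_left
        (2 * r * Real.exp (-r^2))) fun n => (key n).symm
    rw [← ENNReal.ofReal_tsum_of_nonneg hnn hsum]
    congr 1
    rw [tsum_congr key, tsum_mul_left]
    have : (∑' n : ℕ, (r^2)^n / (Nat.factorial n)) = Real.exp (r^2) := by
      rw [Real.exp_eq_exp_ℝ, NormedSpace.exp_eq_tsum_div]
    rw [this, mul_assoc, ← Real.exp_add, neg_add_cancel, Real.exp_zero, mul_one]
  · simp [Set.indicator_of_notMem hr]

lemma stmt17_key
    {Ω : Type*} [MeasureSpace Ω] [IsProbabilityMeasure (ℙ : Measure Ω)]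
    (ρ : ℕ → Ω → ℝ) (hρ_meas : ∀ n, Measurable (ρ n))
    (hρ_law : ∀ n : ℕ, (ℙ : Measure Ω).map (ρ n) =
      volume.withDensity (fun r => ENNReal.ofReal
        (Set.indicator (Set.Ici (0 : ℝ))
          (fun r => 2 * r ^ (2 * n + 1) * Real.exp (-r ^ 2) / (Nat.factorial n)) r)))
    (f : ℝ → ℝ) (hf_meas : Measurable f)
    (hf_range : ∀ x, f x ∈ Set.Ico (0 : ℝ) 1)
    (hf_int : Integrable f) (hxf_int : Integrable (fun x => x * f x))
    {K R : ℝ} (hsupp : ∀ x, f x ≠ 0 → -K ≤ x) (hR : 0 < R) (hKR : K ≤ R^2) :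
    ∑' n : ℕ, ∫ ω, f (R * (ρ n ω - R)) ∂ℙ
      = 2 * (∫ x, f x) + (2 / R^2) * ∫ x, x * f x := by
  have haff : Measurable (fun r : ℝ => R * (r - R)) := by fun_prop
  set F : ℝ → ENNReal := fun r => ENNReal.ofReal (f (R * (r - R))) with hF
  have hF_meas : Measurable F := ENNReal.measurable_ofReal.comp (hf_meas.comp haff)
  set d : ℕ → ℝ → ENNReal := fun n r => ENNReal.ofReal
      (Set.indicator (Set.Ici (0 : ℝ))
        (fun r => 2 * r ^ (2 * n + 1) * Real.exp (-r ^ 2) / (Nat.factorial n)) r) with hd_def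
  have hd : ∀ n, Measurable (d n) := fun n =>
    ENNReal.measurable_ofReal.comp ((Measurable.indicator (by measurability) measurableSet_Ici))
  set g : ℝ → ℝ := fun r =>
      Set.indicator (Set.Ici (0:ℝ)) (fun r => 2 * r) r * f (R * (r - R)) with hg_def
  have hg_meas : Measurable g :=
    ((Measurable.indicator (by fun_prop) measurableSet_Ici)).mul (hf_meas.comp haff)
  have hg_nonneg : ∀ r, 0 ≤ g r := fun r =>
    mul_nonneg (Set.indicator_nonneg (fun x hx => by have h:(0:ℝ)≤x := hx; positivity) r) (hf_range _).1
  -- Step 1: each term as lintegral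
  have h1 : ∀ n : ℕ, ∫ ω, f (R * (ρ n ω - R)) ∂ℙ
      = (∫⁻ ω, ENNReal.ofReal (f (R * (ρ n ω - R))) ∂ℙ).toReal := fun n =>
    integral_eq_lintegral_of_nonneg_ae (ae_of_all _ fun ω => (hf_range _).1)
      ((hf_meas.comp (haff.comp (hρ_meas n))).aestronglyMeasurable)
  -- Step 2: finiteness
  have h2 : ∀ n : ℕ, (∫⁻ ω, ENNReal.ofReal (f (R * (ρ n ω - R))) ∂ℙ) ≠ ⊤ := by
    intro n
    refine ne_top_of_le_ne_top ENNReal.one_ne_top ?_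
    calc ∫⁻ ω, ENNReal.ofReal (f (R * (ρ n ω - R))) ∂ℙ
        ≤ ∫⁻ _, 1 ∂ℙ := lintegral_mono fun ω => ENNReal.ofReal_le_one.mpr (hf_range _).2.le
      _ = 1 := by simp
  -- Step 3: transfer to the density
  have h3 : ∀ n : ℕ, ∫⁻ ω, ENNReal.ofReal (f (R * (ρ n ω - R))) ∂ℙ
      = ∫⁻ r, d n r * F r := by
    intro n
    have : ∫⁻ ω, ENNReal.ofReal (f (R * (ρ n ω - R))) ∂ℙ
        = ∫⁻ r, F r ∂((ℙ : Measure Ω).map (ρ n)) :=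
      (lintegral_map hF_meas (hρ_meas n)).symm
    rw [this, hρ_law n, lintegral_withDensity_eq_lintegral_mul _ (hd n) hF_meas]
    rfl
  -- Step 5: sum over n
  have h5 : (∑' n : ℕ, ∫⁻ r, d n r * F r)
      = ∫⁻ r, ENNReal.ofReal (g r) := by
    rw [← lintegral_tsum (f := fun n r => d n r * F r) (fun n => ((hd n).mul hF_meas).aemeasurable)]
    refine lintegral_congr fun r => ?_
    rw [ENNReal.tsum_mul_right]
    have : (∑' n : ℕ, d n r) = ENNReal.ofReal (Set.indicator (Set.Ici (0:ℝ)) (fun r => 2 * r) r) :=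
      stmt17_density_tsum r
    rw [this, ← ENNReal.ofReal_mul (Set.indicator_nonneg (fun x hx => by have h:(0:ℝ)≤x := hx; positivity) r)]
  -- Step 7: back to a Bochner integral
  have h7 : (∫⁻ r, ENNReal.ofReal (g r)).toReal = ∫ r, g r :=
    (integral_eq_lintegral_of_nonneg_ae (ae_of_all _ hg_nonneg)
      hg_meas.aestronglyMeasurable).symm
  -- Step 8: change of variables
  have h8 : ∫ x, g (x / R + R) = R * ∫ r, g r := by
    calc ∫ x, g (x / R + R) = ∫ x, (fun u => g (u + R)) (x / R) := rfl
      _ = |R| • ∫ u, g (u + R) := Measure.integral_comp_div (fun u => g (u + R)) R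
      _ = R * ∫ u, g (u + R) := by rw [abs_of_pos hR, smul_eq_mul]
      _ = R * ∫ r, g r := by rw [integral_add_right_eq_self]
  -- Step 9: pointwise identity
  have h9 : ∀ x : ℝ, R⁻¹ * g (x / R + R) = 2 * f x + (2 / R^2) * (x * f x) := by
    intro x
    have harg : R * ((x / R + R) - R) = x := by field_simp; ring
    by_cases hfx : f x = 0
    · simp only [hg_def]
      rw [harg, hfx]
      ring
    · have hx : -K ≤ x := hsupp x hfx
      have hmem : x / R + R ∈ Set.Ici (0:ℝ) := by
        have h0 : 0 ≤ x + R^2 := by nlinarith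
        have heq : x / R + R = (x + R^2) / R := by field_simp
        rw [Set.mem_Ici, heq]
        exact div_nonneg h0 hR.le
      simp only [hg_def, Set.indicator_of_mem hmem, harg]
      field_simp
      ring
  -- assemble
  calc ∑' n : ℕ, ∫ ω, f (R * (ρ n ω - R)) ∂ℙ
      = ∑' n : ℕ, (∫⁻ ω, ENNReal.ofReal (f (R * (ρ n ω - R))) ∂ℙ).toReal := tsum_congr h1
    _ = (∑' n : ℕ, ∫⁻ ω, ENNReal.ofReal (f (R * (ρ n ω - R))) ∂ℙ).toReal :=
        (ENNReal.tsum_toReal_eq h2).symm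
    _ = (∫⁻ r, ENNReal.ofReal (g r)).toReal := by rw [tsum_congr h3, h5]
    _ = ∫ r, g r := h7
    _ = R⁻¹ * ∫ x, g (x / R + R) := by
        rw [h8, ← mul_assoc, inv_mul_cancel₀ hR.ne', one_mul]
    _ = ∫ x, R⁻¹ * g (x / R + R) := (integral_const_mul _ _).symm
    _ = ∫ x, (2 * f x + (2 / R^2) * (x * f x)) := by
        exact integral_congr_ae (ae_of_all _ h9)
    _ = 2 * (∫ x, f x) + (2 / R^2) * ∫ x, x * f x := by
        rw [integral_add (hf_int.const_mul 2) (hxf_int.const_mul _),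
          integral_const_mul, integral_const_mul]

/-- convergence of intensities for the rescaled Ginibre moduli:
`∑_n E[f(R (ρ_n − R))] → 2 ∫_ℝ f(x) dx` as `R → +∞`. -/
theorem stmt17
    {Ω : Type*} [MeasureSpace Ω] [IsProbabilityMeasure (ℙ : Measure Ω)]
    (ρ : ℕ → Ω → ℝ)
    (hρ_meas : ∀ n, Measurable (ρ n))
    (hρ_nonneg : ∀ n, ∀ ω, 0 ≤ ρ n ω)
    (hρ_indep : iIndepFun ρ ℙ)
    (hρ_law : ∀ n : ℕ, (ℙ : Measure Ω).map (ρ n) =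
      volume.withDensity (fun r => ENNReal.ofReal
        (Set.indicator (Set.Ici (0 : ℝ))
          (fun r => 2 * r ^ (2 * n + 1) * Real.exp (-r ^ 2) / (Nat.factorial n)) r)))
    (f : ℝ → ℝ) (hf_meas : Measurable f) (hf_supp : HasCompactSupport f)
    (hf_range : ∀ x, f x ∈ Set.Ico (0 : ℝ) 1) :
    Tendsto (fun R : ℝ => ∑' n : ℕ, ∫ ω, f (R * (ρ n ω - R)) ∂ℙ)
      atTop (nhds (2 * ∫ x : ℝ, f x)) := by
  -- a bound for the support
  obtain ⟨r₀, hr₀⟩ := hf_supp.isCompact.isBounded.subset_closedBall 0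
  set K : ℝ := max r₀ 0 with hK_def
  have hK0 : 0 ≤ K := le_max_right _ _
  have hsupp_sub : tsupport f ⊆ Set.Icc (-K) K := by
    refine hr₀.trans ?_
    rw [Real.closedBall_eq_Icc]
    intro x hx
    constructor
    · calc -K ≤ -r₀ := by simp [hK_def]
        _ = 0 - r₀ := by ring
        _ ≤ x := hx.1
    · calc x ≤ 0 + r₀ := hx.2
        _ = r₀ := by ring
        _ ≤ K := le_max_left _ _
  have hsupp : ∀ x, f x ≠ 0 → -K ≤ x := fun x hx =>
    (hsupp_sub (subset_tsupport f hx)).1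
  have hsupp' : ∀ x, f x ≠ 0 → x ∈ Set.Icc (-K) K := fun x hx =>
    hsupp_sub (subset_tsupport f hx)
  -- integrability of f and x * f
  have hind : Integrable ((Set.Icc (-K) K).indicator (fun _ => (1:ℝ))) := by
    refine IntegrableOn.integrable_indicator ?_ measurableSet_Icc
    exact integrableOn_const measure_Icc_lt_top.ne
  have hf_int : Integrable f := by
    refine hind.mono' hf_meas.aestronglyMeasurable (ae_of_all _ fun x => ?_)
    by_cases hx : f x = 0
    · simp only [hx, norm_zero]
      exact Set.indicator_nonneg (fun _ _ => zero_le_one) x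
    · rw [Set.indicator_of_mem (hsupp' x hx)]
      rw [Real.norm_eq_abs, abs_of_nonneg (hf_range x).1]
      exact (hf_range x).2.le
  have hxf_int : Integrable (fun x => x * f x) := by
    have hindK : Integrable ((Set.Icc (-K) K).indicator (fun _ => (K:ℝ))) := by
      refine IntegrableOn.integrable_indicator ?_ measurableSet_Icc
      exact integrableOn_const measure_Icc_lt_top.ne
    refine hindK.mono' (measurable_id.mul hf_meas).aestronglyMeasurable
      (ae_of_all _ fun x => ?_)
    by_cases hx : f x = 0
    · simp only [hx, mul_zero, norm_zero]
      exact Set.indicator_nonneg (fun _ _ => hK0) x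
    · rw [Set.indicator_of_mem (hsupp' x hx)]
      have h1 : |x| ≤ K := abs_le.mpr ⟨(hsupp' x hx).1, (hsupp' x hx).2⟩
      have h2 : |f x| ≤ 1 := by
        rw [abs_of_nonneg (hf_range x).1]; exact (hf_range x).2.le
      calc ‖x * f x‖ = |x| * |f x| := by rw [Real.norm_eq_abs, abs_mul]
        _ ≤ K * 1 := mul_le_mul h1 h2 (abs_nonneg _) hK0
        _ = K := mul_one K
  -- the limit of the explicit formula
  have h0 : Tendsto (fun R : ℝ => 2 / R ^ 2) atTop (nhds 0) :=
    Tendsto.div_atTop tendsto_const_nhds (tendsto_pow_atTop two_ne_zero)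
  have hlim : Tendsto
      (fun R : ℝ => 2 * (∫ x, f x) + (2 / R ^ 2) * ∫ x, x * f x)
      atTop (nhds (2 * ∫ x : ℝ, f x)) := by
    have h1 : Tendsto (fun _ : ℝ => 2 * (∫ x, f x)) atTop (nhds (2 * ∫ x : ℝ, f x)) :=
      tendsto_const_nhds
    have h2 := h1.add (h0.mul_const (∫ x, x * f x))
    simpa using h2
  refine Tendsto.congr' ?_ hlim
  filter_upwards [eventually_ge_atTop (max 1 K)] with R hR
  have hR1 : 1 ≤ R := (le_max_left 1 K).trans hR
  have hRpos : 0 < R := lt_of_lt_of_le one_pos hR1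
  have hKR : K ≤ R ^ 2 := by
    have : K ≤ R := (le_max_right 1 K).trans hR
    nlinarith
  exact (stmt17_key ρ hρ_meas hρ_law f hf_meas hf_range hf_int hxf_int hsupp hRpos hKR).symm
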